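/- arXiv:2102.04509 — 2 statements merged into one kernel-verified Lean document; each statement's English description precedes it below -/
import Mathlib

section
/- With the setup of the previous statement, let Q(x',x) = min{ exp(Δ(x',x)/2)/Z(x), exp(Δ(x',x)/2)/Z(x') } and Q^∇(x',x) = min{ exp(∇(x',x)/2)/Z̃(x), exp(Δ(x',x) + ∇(x,x')/2)/Z̃(x') }. Then for all x' ≠ x with x' ∈ H(x), Q^∇(x',x) ≥ exp(-L·D_H²/2)·Q(x',x). -/
open intervalIntegral in
lemma taylor_quad {E : Type*} [NormedAddCommGroup E] [InnerProductSpace ℝ E] [CompleteSpace E]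
    (f : E → ℝ) (L : NNReal) (hf : Differentiable ℝ f)
    (hL : LipschitzWith L (gradient f)) (x y : E) :
    |f y - f x - (inner ℝ (gradient f x) (y - x) : ℝ)| ≤ (L : ℝ) / 2 * ‖y - x‖ ^ 2 := by
  set v := y - x with hv
  have hline : ∀ t : ℝ, HasDerivAt (fun t : ℝ => x + t • v) v t := by
    intro t
    simpa using ((hasDerivAt_id t).smul_const v).const_add x
  have hφ : ∀ t : ℝ, HasDerivAt (fun t => f (x + t • v))
      (inner ℝ (gradient f (x + t • v)) v : ℝ) t := by
    intro t
    have hfd := ((hf (x + t • v)).hasGradientAt).hasFDerivAt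
    have h2 := hfd.comp_hasDerivAt t (hline t)
    simpa only [Function.comp_def, InnerProductSpace.toDual_apply_apply] using h2
  have hgc : Continuous fun t : ℝ => gradient f (x + t • v) :=
    hL.continuous.comp (by continuity)
  have hcont : Continuous fun t : ℝ => (inner ℝ (gradient f (x + t • v)) v : ℝ) :=
    hgc.inner continuous_const
  have hFTC : f y - f x = ∫ t in (0:ℝ)..1, (inner ℝ (gradient f (x + t • v)) v : ℝ) := by
    have h := intervalIntegral.integral_eq_sub_of_hasDerivAt
      (f := fun t => f (x + t • v)) (fun t _ => hφ t) (hcont.intervalIntegrable 0 1)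
    simp only [one_smul, zero_smul, add_zero, hv, add_sub_cancel] at h
    exact h.symm
  have hc0 : (inner ℝ (gradient f x) v : ℝ) = ∫ t in (0:ℝ)..1, (inner ℝ (gradient f x) v : ℝ) := by
    simp
  rw [hFTC, hc0, ← intervalIntegral.integral_sub (hcont.intervalIntegrable 0 1)
    (intervalIntegrable_const)]
  have hbound : ∀ t ∈ Set.uIoc (0:ℝ) 1,
      ‖(inner ℝ (gradient f (x + t • v)) v : ℝ) - (inner ℝ (gradient f x) v : ℝ)‖
        ≤ (L : ℝ) * ‖v‖ ^ 2 * t := by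
    intro t ht
    rw [Set.uIoc_of_le zero_le_one] at ht
    rw [← inner_sub_left]
    calc ‖(inner ℝ (gradient f (x + t • v) - gradient f x) v : ℝ)‖
        ≤ ‖gradient f (x + t • v) - gradient f x‖ * ‖v‖ := norm_inner_le_norm _ _
      _ ≤ ((L : ℝ) * ‖t • v‖) * ‖v‖ := by
          gcongr
          have := hL.dist_le_mul (x + t • v) x
          simpa [dist_eq_norm] using this
      _ = (L : ℝ) * ‖v‖ ^ 2 * t := by
          rw [norm_smul]
          simp [abs_of_pos ht.1]
          ring
  calc |∫ t in (0:ℝ)..1, ((inner ℝ (gradient f (x + t • v)) v : ℝ) - inner ℝ (gradient f x) v)|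
      ≤ |∫ t in (0:ℝ)..1, (L : ℝ) * ‖v‖ ^ 2 * t| := by
        rw [← Real.norm_eq_abs]
        refine (intervalIntegral.norm_integral_le_of_norm_le (μ := MeasureTheory.volume) zero_le_one ?_
          ((by fun_prop : Continuous fun t : ℝ => (L : ℝ) * ‖v‖ ^ 2 * t).intervalIntegrable 0 1)).trans (le_abs_self _)
        exact Filter.Eventually.of_forall fun t ht => hbound t (by rwa [Set.uIoc_of_le zero_le_one])
    _ = (L : ℝ) / 2 * ‖v‖ ^ 2 := by
        rw [intervalIntegral.integral_const_mul, integral_id]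
        rw [abs_of_nonneg (by positivity)]
        ring



/-- Peskun-type kernel domination for the Taylor-approximate locally balanced proposal:
with `Δ(x',x) = f x' - f x`, `∇(x',x) = ⟪∇f x, x' - x⟫`,
`Z(x) = Σ_{y∈H x} exp(Δ(y,x)/2)`, `Z̃(x) = Σ_{y∈H x} exp(∇(y,x)/2)`,
`Q(x',x) = min(exp(Δ(x',x)/2)/Z x, exp(Δ(x',x)/2)/Z x')` and
`Q^∇(x',x) = min(exp(∇(x',x)/2)/Z̃ x, exp(Δ(x',x) + ∇(x,x')/2)/Z̃ x')`,
if `f` is `L`-smooth and `H` is symmetric with neighbor distances bounded by `D_H`, then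
`Q^∇(x',x) ≥ exp(-L·D_H²/2)·Q(x',x)` for all `x' ∈ H x` with `x' ≠ x`. -/
theorem kernel_domination {D : ℕ}
    (f : EuclideanSpace ℝ (Fin D) → ℝ) (L : NNReal)
    (hf : Differentiable ℝ f)
    (hL : LipschitzWith L (gradient f))
    (H : EuclideanSpace ℝ (Fin D) → Finset (EuclideanSpace ℝ (Fin D)))
    (hsym : ∀ x x', x' ∈ H x ↔ x ∈ H x')
    (DH : ℝ) (hDH : ∀ x, ∀ x' ∈ H x, ‖x' - x‖ ≤ DH)
    (Δ : EuclideanSpace ℝ (Fin D) → EuclideanSpace ℝ (Fin D) → ℝ)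
    (hΔ : ∀ x' x, Δ x' x = f x' - f x)
    (g : EuclideanSpace ℝ (Fin D) → EuclideanSpace ℝ (Fin D) → ℝ)
    (hg : ∀ x' x, g x' x = (inner ℝ (gradient f x) (x' - x) : ℝ))
    (Z Ztil : EuclideanSpace ℝ (Fin D) → ℝ)
    (hZ : ∀ x, Z x = ∑ y ∈ H x, Real.exp (Δ y x / 2))
    (hZtil : ∀ x, Ztil x = ∑ y ∈ H x, Real.exp (g y x / 2))
    (Q Qgrad : EuclideanSpace ℝ (Fin D) → EuclideanSpace ℝ (Fin D) → ℝ)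
    (hQ : ∀ x' x, Q x' x = min (Real.exp (Δ x' x / 2) / Z x) (Real.exp (Δ x' x / 2) / Z x'))
    (hQgrad : ∀ x' x, Qgrad x' x =
      min (Real.exp (g x' x / 2) / Ztil x) (Real.exp (Δ x' x + g x x' / 2) / Ztil x')) :
    ∀ x, ∀ x' ∈ H x, x' ≠ x →
      Real.exp (-(L : ℝ) * DH ^ 2 / 2) * Q x' x ≤ Qgrad x' x := by
  intro x x' hx' hne
  set c := (L : ℝ) * DH ^ 2 / 2 with hc
  have hkey : ∀ a b : EuclideanSpace ℝ (Fin D), b ∈ H a → |Δ b a - g b a| ≤ c := by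
    intro a b hb
    rw [hΔ, hg]
    have h1 := taylor_quad f L hf hL a b
    have h2 : ‖b - a‖ ^ 2 ≤ DH ^ 2 := by
      have h := hDH a b hb
      nlinarith [norm_nonneg (b - a)]
    calc |f b - f a - (inner ℝ (gradient f a) (b - a) : ℝ)|
        ≤ (L : ℝ) / 2 * ‖b - a‖ ^ 2 := h1
      _ ≤ c := by rw [hc]; nlinarith [L.coe_nonneg]
  have hZpos : ∀ a, (H a).Nonempty → 0 < Z a := fun a ha => by
    rw [hZ]; exact Finset.sum_pos (fun y _ => Real.exp_pos _) ha
  have hZtilpos : ∀ a, (H a).Nonempty → 0 < Ztil a := fun a ha => by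
    rw [hZtil]; exact Finset.sum_pos (fun y _ => Real.exp_pos _) ha
  have hxne : (H x).Nonempty := ⟨x', hx'⟩
  have hx'mem : x ∈ H x' := (hsym x x').1 hx'
  have hx'ne : (H x').Nonempty := ⟨x, hx'mem⟩
  have hZtil_le : ∀ a, Ztil a ≤ Real.exp (c / 2) * Z a := by
    intro a
    rw [hZtil, hZ, Finset.mul_sum]
    refine Finset.sum_le_sum fun y hy => ?_
    rw [← Real.exp_add]
    exact Real.exp_le_exp.2 (by linarith [(abs_le.1 (hkey a y hy)).1])
  have hee : Real.exp (-c) * Real.exp (c / 2) = Real.exp (-c / 2) := by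
    rw [← Real.exp_add]; ring_nf
  have h1 : Real.exp (-c) * (Real.exp (Δ x' x / 2) / Z x)
      ≤ Real.exp (g x' x / 2) / Ztil x := by
    rw [mul_div_assoc', div_le_div_iff₀ (hZpos x hxne) (hZtilpos x hxne)]
    calc Real.exp (-c) * Real.exp (Δ x' x / 2) * Ztil x
        ≤ Real.exp (-c) * Real.exp (Δ x' x / 2) * (Real.exp (c / 2) * Z x) := by
          have := hZtil_le x
          gcongr
      _ = Real.exp (-c / 2 + Δ x' x / 2) * Z x := by
          rw [Real.exp_add, ← hee]; ring
      _ ≤ Real.exp (g x' x / 2) * Z x := by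
          have hk := (abs_le.1 (hkey x x' hx')).2
          exact mul_le_mul_of_nonneg_right (Real.exp_le_exp.2 (by linarith)) (hZpos x hxne).le
  have h2 : Real.exp (-c) * (Real.exp (Δ x' x / 2) / Z x')
      ≤ Real.exp (Δ x' x + g x x' / 2) / Ztil x' := by
    rw [mul_div_assoc', div_le_div_iff₀ (hZpos x' hx'ne) (hZtilpos x' hx'ne)]
    calc Real.exp (-c) * Real.exp (Δ x' x / 2) * Ztil x'
        ≤ Real.exp (-c) * Real.exp (Δ x' x / 2) * (Real.exp (c / 2) * Z x') := by
          have := hZtil_le x'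
          gcongr
      _ = Real.exp (-c / 2 + Δ x' x / 2) * Z x' := by
          rw [Real.exp_add, ← hee]; ring
      _ ≤ Real.exp (Δ x' x + g x x' / 2) * Z x' := by
          have hk := (abs_le.1 (hkey x' x hx'mem)).2
          have hanti : Δ x x' = -Δ x' x := by rw [hΔ, hΔ]; ring
          refine mul_le_mul_of_nonneg_right (Real.exp_le_exp.2 ?_) (hZpos x' hx'ne).le
          rw [hanti] at hk; linarith
  rw [hQ, hQgrad]
  have hcneg : -(L : ℝ) * DH ^ 2 / 2 = -c := by rw [hc]; ring
  rw [hcneg]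
  refine le_min ?_ ?_
  · exact le_trans (mul_le_mul_of_nonneg_left (min_le_left _ _) (Real.exp_pos _).le) h1
  · exact le_trans (mul_le_mul_of_nonneg_left (min_le_right _ _) (Real.exp_pos _).le) h2
end

section
/- Let Q₁ and Q₂ be irreducible Markov transition matrices on a finite state space X, both reversible with respect to a probability distribution p, and suppose Q₁(x,x') ≥ c·Q₂(x,x') for all x ≠ x' and some c ∈ (0,1]. Then the spectral gap satisfies Gap(Q₁) ≥ c·Gap(Q₂), where Gap(Q) = 1 - λ₂(Q) and λ₂ is the second largest eigenvalue of Q. -/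
open Matrix

/-- The symmetrization `S(x,y) = √p(x)·Q(x,y)/√p(y)` of a `p`-reversible transition
matrix; it has the same eigenvalues as `Q`. -/
noncomputable def symmetrize {n : ℕ} (p : Fin n → ℝ) (Q : Matrix (Fin n) (Fin n) ℝ) :
    Matrix (Fin n) (Fin n) ℝ :=
  Matrix.of fun x y => Real.sqrt (p x) * Q x y / Real.sqrt (p y)

/-- The second largest eigenvalue (counted with multiplicity) of a Hermitian matrix:
sort the eigenvalues in increasing order and take the `(n-2)`-th entry. -/
noncomputable def lambdaTwo {n : ℕ} {S : Matrix (Fin n) (Fin n) ℝ} (hS : S.IsHermitian) : ℝ :=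
  ((Finset.univ.val.map hS.eigenvalues).sort (· ≤ ·)).getD (n - 2) 0

lemma sort_univ_map_eq {n : ℕ} (f : Fin n → ℝ) :
    ((Finset.univ.val.map f).sort (· ≤ ·)) = List.ofFn (f ∘ Tuple.sort f) := by
  have hperm : (List.ofFn (f ∘ Tuple.sort f) : Multiset ℝ) = Finset.univ.val.map f := by
    rw [List.ofFn_eq_map]
    have h2 : (Finset.univ.val : Multiset (Fin n)).map (Tuple.sort f) = Finset.univ.val := by
      have := Finset.map_univ_equiv (Tuple.sort f)
      calc (Finset.univ.val : Multiset (Fin n)).map (Tuple.sort f)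
          = (Finset.univ.map (Tuple.sort f).toEmbedding).val := rfl
        _ = Finset.univ.val := by rw [Finset.map_univ_equiv]
    calc ((List.map (f ∘ Tuple.sort f) (List.finRange n) : List ℝ) : Multiset ℝ)
        = ((List.finRange n : Multiset (Fin n)).map (Tuple.sort f)).map f := by
          simp [Multiset.map_coe, List.map_map]
      _ = Finset.univ.val.map f := by
          rw [show ((List.finRange n : List (Fin n)) : Multiset (Fin n)) = Finset.univ.val by simp [Fin.univ_def], h2]
  refine List.Perm.eq_of_pairwise' (Multiset.pairwise_sort _ _) ?_ ?_
  · exact (Tuple.monotone_sort f).sortedLE_ofFn.pairwise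
  · rw [← Multiset.coe_eq_coe, Multiset.sort_eq, hperm]

lemma lambdaTwo_eq' {n : ℕ} (hn : 0 < n) (f : Fin n → ℝ) :
    ((Finset.univ.val.map f).sort (· ≤ ·)).getD (n-2) 0 = f (Tuple.sort f ⟨n-2, by omega⟩) := by
  rw [sort_univ_map_eq, List.getD_eq_getElem _ _ (by simp; omega)]
  simp

variable {n : ℕ} {S : Matrix (Fin n) (Fin n) ℝ} (hS : S.IsHermitian)

noncomputable def evec (hS : S.IsHermitian) (i : Fin n) : Fin n → ℝ := ⇑(hS.eigenvectorBasis i)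

lemma evec_dot (i j : Fin n) : dotProduct (evec hS i) (evec hS j) = if i = j then 1 else 0 := by
  have := hS.eigenvectorBasis.orthonormal
  rw [orthonormal_iff_ite] at this
  have h := this i j
  rw [EuclideanSpace.inner_eq_star_dotProduct] at h
  simpa [evec, dotProduct, mul_comm] using h

lemma evec_mulVec (i : Fin n) : S *ᵥ evec hS i = hS.eigenvalues i • evec hS i :=
  hS.mulVec_eigenvectorBasis i

lemma evec_expand (f : Fin n → ℝ) :
    f = ∑ i, (dotProduct (evec hS i) f) • evec hS i := by
  have h := hS.eigenvectorBasis.sum_repr (WithLp.toLp 2 f : EuclideanSpace ℝ (Fin n))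
  have h2 : ∀ i, hS.eigenvectorBasis.repr (WithLp.toLp 2 f : EuclideanSpace ℝ (Fin n)) i
      = dotProduct (evec hS i) f := by
    intro i
    rw [hS.eigenvectorBasis.repr_apply_apply, EuclideanSpace.inner_eq_star_dotProduct]
    simp [evec, dotProduct, mul_comm]
  funext x
  have := congrFun (congrArg (fun v : EuclideanSpace ℝ (Fin n) => (v : Fin n → ℝ)) h) x
  simp only at this
  simp only [h2] at this
  rw [← this]
  have e1 : (∑ i, (dotProduct (evec hS i) f) • hS.eigenvectorBasis i : EuclideanSpace ℝ (Fin n)) x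
      = ∑ i, ((dotProduct (evec hS i) f) • hS.eigenvectorBasis i : EuclideanSpace ℝ (Fin n)) x :=
    by rw [WithLp.ofLp_sum, Finset.sum_apply]
  rw [e1, Finset.sum_apply]
  rfl

lemma dot_sum_sum (a b : Fin n → ℝ) :
    dotProduct (∑ i, a i • evec hS i) (∑ j, b j • evec hS j) = ∑ i, a i * b i := by
  simp only [dotProduct, Finset.sum_apply, Pi.smul_apply, smul_eq_mul]
  have h1 : ∀ x, (∑ i, a i * evec hS i x) * (∑ j, b j * evec hS j x)
      = ∑ i, ∑ j, (a i * b j) * (evec hS i x * evec hS j x) := by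
    intro x
    rw [Finset.sum_mul_sum]
    exact Finset.sum_congr rfl fun i _ => Finset.sum_congr rfl fun j _ => by ring
  simp_rw [h1]
  rw [Finset.sum_comm]
  refine Finset.sum_congr rfl fun i _ => ?_
  rw [Finset.sum_comm]
  have h2 : ∀ j, ∑ x, (a i * b j) * (evec hS i x * evec hS j x)
      = (a i * b j) * dotProduct (evec hS i) (evec hS j) := by
    intro j
    rw [dotProduct, Finset.mul_sum]
  simp_rw [h2, evec_dot hS]
  simp

lemma coeff_eq (a : Fin n → ℝ) (j : Fin n) :
    dotProduct (evec hS j) (∑ i, a i • evec hS i) = a j := by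
  have := dot_sum_sum hS (fun i => if i = j then 1 else 0) a
  simp only [ite_smul, one_smul, zero_smul, Finset.sum_ite_eq'] at this
  simpa using this

lemma dot_self_eq_sum (f : Fin n → ℝ) :
    dotProduct f f = ∑ i, (dotProduct (evec hS i) f)^2 := by
  have h : dotProduct f f = dotProduct (∑ i, (dotProduct (evec hS i) f) • evec hS i)
      (∑ i, (dotProduct (evec hS i) f) • evec hS i) := by
    conv_lhs => rw [evec_expand hS f]
  rw [h, dot_sum_sum]
  exact Finset.sum_congr rfl fun i _ => (pow_two _).symm

lemma dot_mulVec_eq_sum (f : Fin n → ℝ) :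
    dotProduct f (S *ᵥ f) = ∑ i, hS.eigenvalues i * (dotProduct (evec hS i) f)^2 := by
  have h : dotProduct f (S *ᵥ f) = dotProduct (∑ i, (dotProduct (evec hS i) f) • evec hS i)
      (S *ᵥ ∑ i, (dotProduct (evec hS i) f) • evec hS i) := by
    conv_lhs => rw [evec_expand hS f]
  rw [h]
  have h2 : S *ᵥ (∑ i, (dotProduct (evec hS i) f) • evec hS i)
      = ∑ i, ((dotProduct (evec hS i) f) * hS.eigenvalues i) • evec hS i := by
    simp_rw [← Matrix.mulVecLin_apply, map_sum, _root_.map_smul, Matrix.mulVecLin_apply, evec_mulVec hS,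
      smul_smul]
  rw [h2, dot_sum_sum]
  exact Finset.sum_congr rfl fun i _ => by ring

lemma lambdaTwo_def {n : ℕ} (hn : 2 ≤ n) {S : Matrix (Fin n) (Fin n) ℝ} (hS : S.IsHermitian) :
    lambdaTwo hS = hS.eigenvalues (Tuple.sort hS.eigenvalues ⟨n-2, by omega⟩) := by
  unfold lambdaTwo
  exact lambdaTwo_eq' (by omega) _

lemma sum_smul_dot {n : ℕ} (w : Fin n → ℝ) (u : Fin n → Fin n → ℝ) (v : Fin n → ℝ) :
    dotProduct (∑ k, w k • u k) v = ∑ k, w k * dotProduct (u k) v := by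
  simp only [dotProduct, Finset.sum_apply, Pi.smul_apply, smul_eq_mul, Finset.sum_mul,
    Finset.mul_sum]
  rw [Finset.sum_comm]
  simp [mul_assoc]

lemma lambdaTwo_le {n : ℕ} (hn : 2 ≤ n) {S : Matrix (Fin n) (Fin n) ℝ} (hS : S.IsHermitian)
    (v : Fin n → ℝ) (t : ℝ)
    (ht : ∀ f, dotProduct f v = 0 → dotProduct f (S *ᵥ f) ≤ t * dotProduct f f) :
    lambdaTwo hS ≤ t := by
  set μ := hS.eigenvalues with hμ
  set σ := Tuple.sort μ with hσ
  have h2 : (n:ℕ) - 2 < n := by omega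
  have h1 : (n:ℕ) - 1 < n := by omega
  set i₂ : Fin n := σ ⟨n-2, h2⟩ with hi₂
  set iT : Fin n := σ ⟨n-1, h1⟩ with hiT
  have hlam : lambdaTwo hS = μ i₂ := lambdaTwo_def hn hS
  have hmono : μ i₂ ≤ μ iT := Tuple.monotone_sort μ (by simp [Fin.le_def]; omega)
  have hne : i₂ ≠ iT := by
    intro h
    have := σ.injective h
    simp [Fin.ext_iff] at this
    omega
  rw [hlam]
  by_cases hz : dotProduct (evec hS i₂) v = 0
  · have := ht (evec hS i₂) hz
    rw [evec_mulVec hS, dotProduct_smul, smul_eq_mul, evec_dot hS] at this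
    simpa using this
  · set a : ℝ := dotProduct (evec hS iT) v with ha
    set b : ℝ := -(dotProduct (evec hS i₂) v) with hb
    have hbne : b ≠ 0 := by simpa [hb] using hz
    set w : Fin n → ℝ := fun k => if k = i₂ then a else if k = iT then b else 0 with hw
    set f : Fin n → ℝ := ∑ k, w k • evec hS k with hf
    have hsum : ∀ (g : Fin n → ℝ), ∑ k, g k * w k ^ 2 = g i₂ * a^2 + g iT * b^2 := by
      intro g
      have : ∀ k, g k * w k ^2 = (if k = i₂ then g i₂ * a^2 else 0)
          + (if k = iT then g iT * b^2 else 0) := by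
        intro k
        by_cases h1 : k = i₂
        · subst h1; simp [hw, hne, Ne.symm hne]
        · by_cases h2 : k = iT
          · subst h2; simp [hw, h1]
          · simp [hw, h1, h2]
      simp_rw [this, Finset.sum_add_distrib, Finset.sum_ite_eq', Finset.mem_univ, if_true]
    have hfv : dotProduct f v = 0 := by
      rw [hf, sum_smul_dot]
      have : ∀ k, w k * dotProduct (evec hS k) v
          = (if k = i₂ then a * (-b) else 0) + (if k = iT then b * a else 0) := by
        intro k
        by_cases h1 : k = i₂
        · subst h1
          simp [hw, hne, Ne.symm hne, hb]
          try ring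
        · by_cases h2 : k = iT
          · subst h2
            rw [hw]
            show (if iT = i₂ then a else if iT = iT then b else 0) * _ = _
            rw [if_neg h1, if_pos rfl, if_neg h1, if_pos rfl, ha]
            ring
          · simp [hw, h1, h2]
      simp_rw [this, Finset.sum_add_distrib, Finset.sum_ite_eq', Finset.mem_univ, if_true]
      ring
    have hff : dotProduct f f = a^2 + b^2 := by
      rw [hf, dot_sum_sum hS]
      have := hsum (fun _ => 1)
      simpa [pow_two] using this
    have hfS : dotProduct f (S *ᵥ f) = μ i₂ * a^2 + μ iT * b^2 := by
      rw [hf, dot_mulVec_eq_sum hS]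
      have h0 : ∀ i, dotProduct (evec hS i) (∑ k, w k • evec hS k) = w i :=
        fun i => coeff_eq hS w i
      simp_rw [h0]
      exact hsum μ
    have hpos : 0 < a^2 + b^2 := by positivity
    have := ht f hfv
    rw [hfS, hff] at this
    have hlow : μ i₂ * (a^2 + b^2) ≤ μ i₂ * a^2 + μ iT * b^2 := by nlinarith [sq_nonneg b]
    nlinarith

lemma dot_le_lambdaTwo {n : ℕ} (hn : 2 ≤ n) {S : Matrix (Fin n) (Fin n) ℝ} (hS : S.IsHermitian)
    (v : Fin n → ℝ) (hv : v ≠ 0) (hev : S *ᵥ v = v)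
    (hmax : ∀ f, dotProduct f (S *ᵥ f) ≤ dotProduct f f)
    (f : Fin n → ℝ) (hfv : dotProduct f v = 0) :
    dotProduct f (S *ᵥ f) ≤ lambdaTwo hS * dotProduct f f := by
  set μ := hS.eigenvalues with hμ
  set σ := Tuple.sort μ with hσ
  have h2 : (n:ℕ) - 2 < n := by omega
  have h1 : (n:ℕ) - 1 < n := by omega
  set i₂ : Fin n := σ ⟨n-2, h2⟩ with hi₂
  set i₀ : Fin n := σ ⟨n-1, h1⟩ with hi₀
  have hlam : lambdaTwo hS = μ i₂ := lambdaTwo_def hn hS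
  have key : ∀ i, i ≠ i₀ → μ i ≤ μ i₂ := by
    intro i hi
    have : i = σ (σ.symm i) := (σ.apply_symm_apply i).symm
    rw [this]
    apply Tuple.monotone_sort μ
    have hne : σ.symm i ≠ ⟨n-1, h1⟩ := by
      intro h
      apply hi
      rw [this, h]
    have : (σ.symm i : ℕ) < n := (σ.symm i).isLt
    have : (σ.symm i : ℕ) ≠ n - 1 := fun h => hne (Fin.ext h)
    simp [Fin.le_def]
    omega
  rw [dot_mulVec_eq_sum hS, dot_self_eq_sum hS, hlam, Finset.mul_sum]
  by_cases hcase : μ i₀ ≤ μ i₂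
  · refine Finset.sum_le_sum fun i _ => ?_
    refine mul_le_mul_of_nonneg_right ?_ (sq_nonneg _)
    by_cases hi : i = i₀
    · rw [hi]; exact hcase
    · exact key i hi
  · push_neg at hcase
    have hueig : ∀ i, dotProduct (evec hS i) (S *ᵥ v) = μ i * dotProduct (evec hS i) v := by
      intro i
      rw [dotProduct_mulVec]
      have hsymm : Sᵀ = S := by
        have := hS.eq
        rwa [conjTranspose_eq_transpose_of_trivial] at this
      have hvm : evec hS i ᵥ* S = S *ᵥ evec hS i := by
        have gen : ∀ (A : Matrix (Fin n) (Fin n) ℝ), Aᵀ = A → ∀ x : Fin n → ℝ,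
            x ᵥ* A = A *ᵥ x := by
          intro A hA x
          conv_lhs => rw [← hA]
          exact Matrix.vecMul_transpose A x
        exact gen S hsymm _
      rw [hvm, evec_mulVec hS, smul_dotProduct, smul_eq_mul]
    have dvanish : ∀ i, i ≠ i₀ → dotProduct (evec hS i) v = 0 := by
      intro i hi
      by_contra hd
      have heq : μ i * dotProduct (evec hS i) v = dotProduct (evec hS i) v := by
        rw [← hueig, hev]
      have hμ1 : μ i = 1 := by
        have h' : (μ i - 1) * (dotProduct (evec hS i) v) = 0 := by
          have := heq
          ring_nf
          ring_nf at this
          linarith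
        rcases mul_eq_zero.mp h' with h | h
        · linarith
        · exact absurd h hd
      have hμi₀ : μ i₀ ≤ 1 := by
        have := hmax (evec hS i₀)
        rw [evec_mulVec hS, dotProduct_smul, smul_eq_mul, evec_dot hS] at this
        simpa using this
      have := key i hi
      rw [hμ1] at this
      linarith
    have d₀ : dotProduct (evec hS i₀) v ≠ 0 := by
      intro h0
      apply hv
      have hexp := evec_expand hS v
      rw [hexp]
      refine Finset.sum_eq_zero fun i _ => ?_
      by_cases hi : i = i₀
      · rw [hi, h0, zero_smul]
      · rw [dvanish i hi, zero_smul]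
    have c₀ : dotProduct (evec hS i₀) f = 0 := by
      have hdf : dotProduct f v
          = ∑ i, (dotProduct (evec hS i) f) * (dotProduct (evec hS i) v) := by
        conv_lhs => rw [evec_expand hS f, evec_expand hS v]
        exact dot_sum_sum hS _ _
      rw [hfv] at hdf
      have := Finset.sum_eq_single i₀
        (f := fun i => (dotProduct (evec hS i) f) * (dotProduct (evec hS i) v))
        (fun i _ hi => by
          show dotProduct (evec hS i) f * dotProduct (evec hS i) v = 0
          rw [dvanish i hi, mul_zero]) (fun h => absurd (Finset.mem_univ i₀) h)
      rw [this] at hdf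
      rcases mul_eq_zero.mp hdf.symm with h | h
      · exact h
      · exact absurd h d₀
    refine Finset.sum_le_sum fun i _ => ?_
    by_cases hi : i = i₀
    · rw [hi, c₀]
      simp
    · exact mul_le_mul_of_nonneg_right (key i hi) (sq_nonneg _)

lemma dirichlet {n : ℕ} (p : Fin n → ℝ) (hp : ∀ x, 0 < p x)
    (Q : Matrix (Fin n) (Fin n) ℝ) (hrow : ∀ x, ∑ y, Q x y = 1)
    (hrev : ∀ x y, p x * Q x y = p y * Q y x) (f : Fin n → ℝ) :
    dotProduct f f - dotProduct f (symmetrize p Q *ᵥ f)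
      = (1/2) * ∑ x, ∑ y, p x * Q x y *
          (f x / Real.sqrt (p x) - f y / Real.sqrt (p y))^2 := by
  have hsq : ∀ x, Real.sqrt (p x) * Real.sqrt (p x) = p x :=
    fun x => Real.mul_self_sqrt (hp x).le
  have hsne : ∀ x, Real.sqrt (p x) ≠ 0 :=
    fun x => ne_of_gt (Real.sqrt_pos.mpr (hp x))
  set g : Fin n → ℝ := fun x => f x / Real.sqrt (p x) with hg
  have hfg : ∀ x, f x = Real.sqrt (p x) * g x := by
    intro x
    rw [hg, mul_comm, div_mul_cancel₀ _ (hsne x)]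
  have hA : dotProduct f f = ∑ x, p x * g x ^ 2 := by
    rw [dotProduct]
    refine Finset.sum_congr rfl fun x _ => ?_
    rw [hfg x]
    calc (Real.sqrt (p x) * g x) * (Real.sqrt (p x) * g x)
        = (Real.sqrt (p x) * Real.sqrt (p x)) * (g x * g x) := by ring
      _ = p x * g x ^ 2 := by rw [hsq, pow_two]
  have hB : dotProduct f (symmetrize p Q *ᵥ f) = ∑ x, ∑ y, p x * Q x y * (g x * g y) := by
    rw [dotProduct]
    refine Finset.sum_congr rfl fun x _ => ?_
    rw [mulVec, dotProduct, Finset.mul_sum]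
    refine Finset.sum_congr rfl fun y _ => ?_
    show f x * (Real.sqrt (p x) * Q x y / Real.sqrt (p y) * f y) = _
    rw [hfg x, hfg y]
    rw [show Real.sqrt (p x) * Q x y / Real.sqrt (p y) * (Real.sqrt (p y) * g y)
        = Real.sqrt (p x) * Q x y * g y from by
      rw [div_mul_eq_mul_div, mul_comm (Real.sqrt (p y)) (g y), ← mul_assoc,
        mul_div_assoc, div_self (hsne y), mul_one]]
    calc (Real.sqrt (p x) * g x) * (Real.sqrt (p x) * Q x y * g y)
        = (Real.sqrt (p x) * Real.sqrt (p x)) * (Q x y * (g x * g y)) := by ring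
      _ = p x * Q x y * (g x * g y) := by rw [hsq]; ring
  have e1 : ∑ x, ∑ y, p x * Q x y * g x ^ 2 = ∑ x, p x * g x ^ 2 := by
    refine Finset.sum_congr rfl fun x _ => ?_
    rw [show ∑ y, p x * Q x y * g x ^ 2 = (p x * g x ^2) * ∑ y, Q x y from by
      rw [Finset.mul_sum]; exact Finset.sum_congr rfl fun y _ => by ring]
    rw [hrow x, mul_one]
  have e2 : ∑ x, ∑ y, p x * Q x y * g y ^ 2 = ∑ x, p x * g x ^ 2 := by
    calc ∑ x, ∑ y, p x * Q x y * g y ^ 2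
        = ∑ x, ∑ y, p y * Q y x * g y ^ 2 :=
          Finset.sum_congr rfl fun x _ => Finset.sum_congr rfl fun y _ => by rw [hrev x y]
      _ = ∑ y, ∑ x, p y * Q y x * g y ^ 2 := Finset.sum_comm
      _ = ∑ y, p y * g y ^ 2 := by
          refine Finset.sum_congr rfl fun y _ => ?_
          rw [show ∑ x, p y * Q y x * g y ^ 2 = (p y * g y ^2) * ∑ x, Q y x from by
            rw [Finset.mul_sum]; exact Finset.sum_congr rfl fun x _ => by ring]
          rw [hrow y, mul_one]
  have expand : ∀ x y, p x * Q x y * (g x - g y)^2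
      = p x * Q x y * g x^2 + p x * Q x y * g y^2 - 2 * (p x * Q x y * (g x * g y)) := by
    intro x y; ring
  rw [show (∑ x, ∑ y, p x * Q x y * (f x / Real.sqrt (p x) - f y / Real.sqrt (p y))^2)
      = ∑ x, ∑ y, p x * Q x y * (g x - g y)^2 from rfl]
  simp_rw [expand, Finset.sum_sub_distrib, Finset.sum_add_distrib, ← Finset.mul_sum]
  rw [hA, hB, e1, e2]
  ring

/-- Peskun-type spectral gap comparison (Theorem 2 of Zanella 2020): if `Q₁, Q₂` are
irreducible `p`-reversible Markov transition matrices on a finite state space with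
`Q₁(x,x') ≥ c·Q₂(x,x')` for all `x ≠ x'` and `c ∈ (0,1]`, then
`Gap(Q₁) ≥ c·Gap(Q₂)` where `Gap(Q) = 1 - λ₂(Q)`. -/
theorem spectral_gap_comparison {n : ℕ} (hn : 2 ≤ n)
    (p : Fin n → ℝ) (hp : ∀ x, 0 < p x) (hpsum : ∑ x, p x = 1)
    (Q₁ Q₂ : Matrix (Fin n) (Fin n) ℝ)
    (h1nonneg : ∀ x y, 0 ≤ Q₁ x y) (h1row : ∀ x, ∑ y, Q₁ x y = 1)
    (h2nonneg : ∀ x y, 0 ≤ Q₂ x y) (h2row : ∀ x, ∑ y, Q₂ x y = 1)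
    (h1irred : ∀ x y, ∃ k : ℕ, 0 < (Q₁ ^ k) x y)
    (h2irred : ∀ x y, ∃ k : ℕ, 0 < (Q₂ ^ k) x y)
    (h1rev : ∀ x y, p x * Q₁ x y = p y * Q₁ y x)
    (h2rev : ∀ x y, p x * Q₂ x y = p y * Q₂ y x)
    (c : ℝ) (hc0 : 0 < c) (hc1 : c ≤ 1)
    (hdom : ∀ x y, x ≠ y → c * Q₂ x y ≤ Q₁ x y)
    (hH1 : (symmetrize p Q₁).IsHermitian) (hH2 : (symmetrize p Q₂).IsHermitian) :
    c * (1 - lambdaTwo hH2) ≤ 1 - lambdaTwo hH1 := by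
  have hsne : ∀ x, Real.sqrt (p x) ≠ 0 := fun x => ne_of_gt (Real.sqrt_pos.mpr (hp x))
  set v : Fin n → ℝ := fun x => Real.sqrt (p x) with hv
  have hvne : v ≠ 0 := by
    intro h
    exact hsne ⟨0, by omega⟩ (congrFun h ⟨0, by omega⟩)
  have hev : symmetrize p Q₂ *ᵥ v = v := by
    funext x
    show ∑ y, (Real.sqrt (p x) * Q₂ x y / Real.sqrt (p y)) * Real.sqrt (p y) = Real.sqrt (p x)
    have : ∀ y, (Real.sqrt (p x) * Q₂ x y / Real.sqrt (p y)) * Real.sqrt (p y)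
        = Real.sqrt (p x) * Q₂ x y := fun y => div_mul_cancel₀ _ (hsne y)
    simp_rw [this, ← Finset.mul_sum, h2row x, mul_one]
  have sqnn : ∀ (Q : Matrix (Fin n) (Fin n) ℝ), (∀ x y, 0 ≤ Q x y) → ∀ f : Fin n → ℝ,
      0 ≤ ∑ x, ∑ y, p x * Q x y * (f x / Real.sqrt (p x) - f y / Real.sqrt (p y))^2 := by
    intro Q hQ f
    refine Finset.sum_nonneg fun x _ => Finset.sum_nonneg fun y _ => ?_
    exact mul_nonneg (mul_nonneg (hp x).le (hQ x y)) (sq_nonneg _)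
  have hmax : ∀ f, dotProduct f (symmetrize p Q₂ *ᵥ f) ≤ dotProduct f f := by
    intro f
    have hd := dirichlet p hp Q₂ h2row h2rev f
    have hnn := sqnn Q₂ h2nonneg f
    linarith
  have hcomp : ∀ f : Fin n → ℝ,
      c * (dotProduct f f - dotProduct f (symmetrize p Q₂ *ᵥ f))
        ≤ dotProduct f f - dotProduct f (symmetrize p Q₁ *ᵥ f) := by
    intro f
    rw [dirichlet p hp Q₁ h1row h1rev f, dirichlet p hp Q₂ h2row h2rev f]
    have hsum : ∑ x, ∑ y, c * (p x * Q₂ x y *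
          (f x / Real.sqrt (p x) - f y / Real.sqrt (p y))^2)
        ≤ ∑ x, ∑ y, p x * Q₁ x y *
          (f x / Real.sqrt (p x) - f y / Real.sqrt (p y))^2 := by
      refine Finset.sum_le_sum fun x _ => Finset.sum_le_sum fun y _ => ?_
      by_cases hxy : x = y
      · subst hxy
        simp [sub_self]
      · have h1 : c * Q₂ x y ≤ Q₁ x y := hdom x y hxy
        have h2 : p x * (c * Q₂ x y) ≤ p x * Q₁ x y :=
          mul_le_mul_of_nonneg_left h1 (hp x).le
        calc c * (p x * Q₂ x y * (f x / Real.sqrt (p x) - f y / Real.sqrt (p y))^2)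
            = (p x * (c * Q₂ x y)) * (f x / Real.sqrt (p x) - f y / Real.sqrt (p y))^2 := by
              ring
          _ ≤ (p x * Q₁ x y) * (f x / Real.sqrt (p x) - f y / Real.sqrt (p y))^2 :=
              mul_le_mul_of_nonneg_right h2 (sq_nonneg _)
    have heq : ∑ x, ∑ y, c * (p x * Q₂ x y *
          (f x / Real.sqrt (p x) - f y / Real.sqrt (p y))^2)
        = c * ∑ x, ∑ y, p x * Q₂ x y *
          (f x / Real.sqrt (p x) - f y / Real.sqrt (p y))^2 := by
      simp_rw [Finset.mul_sum]
    rw [heq] at hsum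
    linarith
  have h1le : lambdaTwo hH1 ≤ 1 - c * (1 - lambdaTwo hH2) := by
    apply lambdaTwo_le hn hH1 v
    intro f hf
    have hB := dot_le_lambdaTwo hn hH2 v hvne hev hmax f hf
    have hC := hcomp f
    have hff : 0 ≤ dotProduct f f :=
      Finset.sum_nonneg fun x _ => mul_self_nonneg (f x)
    have hB' : c * dotProduct f (symmetrize p Q₂ *ᵥ f)
        ≤ c * (lambdaTwo hH2 * dotProduct f f) :=
      mul_le_mul_of_nonneg_left hB hc0.le
    ring_nf
    ring_nf at hC hB'
    linarith
  linarith
end
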